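/- arXiv:funct-an/9709001 — 4 statements merged into one kernel-verified Lean document; each statement's English description precedes it below -/
import Mathlib

section
/- For every real number p, every β with |β| ≤ π/2, and every ω ≥ 0, the exterior-scaled momentum p_{iβ}(p), defined by p_{iβ}(p) = p for |p| < ω and p_{iβ}(p) = ±ω + e^{iβ}(p ∓ ω) for ±p ≥ ω, satisfies p² ≥ |p_{iβ}(p)|² ≥ p² cos β. -/
open Real Complex

/-- For every real `p`, every `β` with `|β| ≤ π/2` and every `ω ≥ 0`,
the exterior-scaled momentum `p_{iβ}(p)` satisfies `p² ≥ |p_{iβ}(p)|² ≥ p² cos β`. -/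
theorem exterior_scaled_momentum_modulus_bounds
    (ω β p : ℝ) (hβ : |β| ≤ π / 2) (hω : 0 ≤ ω)
    (pb : ℂ)
    (hpb : pb = if |p| < ω then (p : ℂ)
      else ((Real.sign p * ω : ℝ) : ℂ) +
        Complex.exp (β * Complex.I) * ((p : ℂ) - ((Real.sign p * ω : ℝ) : ℂ))) :
    p ^ 2 * Real.cos β ≤ ‖pb‖ ^ 2 ∧ ‖pb‖ ^ 2 ≤ p ^ 2 := by
  obtain ⟨hβ1, hβ2⟩ := abs_le.mp hβ
  have hcos0 : 0 ≤ Real.cos β := Real.cos_nonneg_of_mem_Icc ⟨hβ1, hβ2⟩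
  have hcos1 : Real.cos β ≤ 1 := Real.cos_le_one β
  by_cases hc : |p| < ω
  · rw [hpb, if_pos hc, Complex.norm_real, Real.norm_eq_abs, _root_.sq_abs]
    exact ⟨by nlinarith [sq_nonneg p], le_refl _⟩
  · set a := Real.sign p * ω with ha
    have hle : ω ≤ |p| := not_lt.mp hc
    have hprod : 0 ≤ a * (p - a) := by
      rcases lt_trichotomy p 0 with h | h | h
      · have : Real.sign p = -1 := Real.sign_of_neg h
        rw [ha, this]
        have : p ≤ -ω := by rw [abs_of_neg h] at hle; linarith
        nlinarith
      · have : Real.sign p = 0 := by rw [h, Real.sign_zero]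
        rw [ha, this]; ring_nf; simp
      · have : Real.sign p = 1 := Real.sign_of_pos h
        rw [ha, this]
        have : ω ≤ p := by rwa [abs_of_pos h] at hle
        nlinarith
    have key : ‖pb‖ ^ 2 = a ^ 2 + 2 * a * (p - a) * Real.cos β + (p - a) ^ 2 := by
      rw [hpb, if_neg hc, Complex.sq_norm, Complex.normSq_apply]
      simp only [Complex.exp_mul_I, Complex.add_re, Complex.add_im, Complex.mul_re,
        Complex.mul_im, Complex.sub_re, Complex.sub_im, Complex.ofReal_re, Complex.ofReal_im,
        Complex.cos_ofReal_re, Complex.cos_ofReal_im, Complex.sin_ofReal_re,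
        Complex.sin_ofReal_im, Complex.I_re, Complex.I_im]
      have hpyth := Real.sin_sq_add_cos_sq β
      linear_combination (p - a) ^ 2 * hpyth
    have hpsq : p ^ 2 = a ^ 2 + 2 * (a * (p - a)) + (p - a) ^ 2 := by ring
    constructor
    · rw [key, hpsq]
      nlinarith [sq_nonneg a, sq_nonneg (p - a)]
    · rw [key, hpsq]
      nlinarith
end

section
/- For every real p with |p| ≥ ω, every ω ≥ 0, and every β with |β| ≤ 2π/3, the real part of p_{iβ}(p)² satisfies Re p_{iβ}(p)² ≥ p² cos(2β) + 2ω² sin²(β). -/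
open Real Complex

/-- For `|p| ≥ ω`, `ω ≥ 0`, `|β| ≤ 2π/3`:
`Re p_{iβ}(p)² ≥ p² cos(2β) + 2ω² sin²(β)`. -/
theorem exterior_scaled_momentum_re_sq_lower_bound
    (ω β p : ℝ) (hβ : |β| ≤ 2 * π / 3) (hω : 0 ≤ ω) (hp : ω ≤ |p|)
    (pb : ℂ)
    (hpb : pb = ((Real.sign p * ω : ℝ) : ℂ) +
        Complex.exp (β * Complex.I) * ((p : ℂ) - ((Real.sign p * ω : ℝ) : ℂ))) :
    p ^ 2 * Real.cos (2 * β) + 2 * ω ^ 2 * Real.sin β ^ 2 ≤ (pb ^ 2).re := by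
  set a : ℝ := Real.sign p * ω with ha
  set b : ℝ := p - a with hb
  -- real and imaginary parts of pb
  have hre : pb.re = a + b * Real.cos β := by
    rw [hpb, Complex.exp_mul_I]
    simp [Complex.add_re, Complex.mul_re, Complex.cos_ofReal_re, hb]
    ring
  have him : pb.im = b * Real.sin β := by
    rw [hpb, Complex.exp_mul_I]
    simp [Complex.add_im, Complex.mul_im, Complex.sin_ofReal_re, hb]
    ring
  have hsq : (pb ^ 2).re = pb.re ^ 2 - pb.im ^ 2 := by
    rw [pow_two, Complex.mul_re]; ring
  rw [hsq, hre, him]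
  -- trig facts
  have hpy : Real.sin β ^ 2 + Real.cos β ^ 2 = 1 := Real.sin_sq_add_cos_sq β
  have hc2 : Real.cos (2 * β) = Real.cos β ^ 2 - Real.sin β ^ 2 :=
    Real.cos_two_mul' β
  have hcos1 : Real.cos β ≤ 1 := Real.cos_le_one β
  have hcosge : -(1/2 : ℝ) ≤ Real.cos β := by
    have h1 : Real.cos (2 * π / 3) ≤ Real.cos |β| := by
      apply Real.cos_le_cos_of_nonneg_of_le_pi (abs_nonneg β) _ hβ
      have hπ : 0 ≤ π := Real.pi_pos.le
      linarith
    have h2 : Real.cos (2 * π / 3) = -(1/2 : ℝ) := by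
      have : (2 : ℝ) * π / 3 = π - π / 3 := by ring
      rw [this, Real.cos_pi_sub, Real.cos_pi_div_three]
    rw [h2, Real.cos_abs] at h1
    exact h1
  -- ab ≥ 0
  have hab : 0 ≤ a * b := by
    rcases lt_trichotomy p 0 with h | h | h
    · have hs : Real.sign p = -1 := Real.sign_of_neg h
      rw [abs_of_neg h] at hp
      simp only [ha, hb, hs]
      nlinarith
    · simp [ha, hb, h, Real.sign_zero]
    · have hs : Real.sign p = 1 := Real.sign_of_pos h
      rw [abs_of_pos h] at hp
      simp only [ha, hb, hs]
      nlinarith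
  have haω : a ^ 2 = ω ^ 2 := by
    rcases lt_trichotomy p 0 with h | h | h
    · simp [ha, Real.sign_of_neg h]
    · have : ω = 0 := le_antisymm (by simpa [h] using hp) hω
      simp [ha, this]
    · simp [ha, Real.sign_of_pos h]
  have hpab : p = a + b := by rw [hb]; ring
  rw [hpab, hc2]
  nlinarith [mul_nonneg hab (mul_nonneg (sub_nonneg.2 hcos1)
      (by linarith : (0:ℝ) ≤ 2 * Real.cos β + 1)), sq_nonneg (Real.sin β)]
end

section
/- For every real p, |p² − p_{iβ}(p)²| ≤ 6 |sin(β/2)| p². -/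
open Real Complex

lemma abs_one_sub_exp (β : ℝ) :
    ‖1 - Complex.exp (β * Complex.I)‖ = 2 * |Real.sin (β / 2)| := by
  rw [Complex.exp_mul_I]
  have h1 : (1 : ℂ) - (Complex.cos β + Complex.sin β * Complex.I)
      = Complex.ofReal (1 - Real.cos β) + Complex.ofReal (- Real.sin β) * Complex.I := by
    push_cast; ring
  rw [h1, Complex.norm_add_mul_I]
  have hc : Real.cos β = 1 - 2 * Real.sin (β / 2) ^ 2 := by
    have h2 := Real.sin_sq_add_cos_sq (β / 2)
    have h3 := Real.cos_two_mul (β / 2)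
    rw [show (2 : ℝ) * (β / 2) = β by ring] at h3
    nlinarith
  have hkey : (1 - Real.cos β) ^ 2 + (-Real.sin β) ^ 2 = (2 * |Real.sin (β / 2)|) ^ 2 := by
    have hs := Real.sin_sq_add_cos_sq β
    rw [mul_pow, _root_.sq_abs]
    nlinarith
  rw [hkey, Real.sqrt_sq (by positivity)]

/-- For every real `p` (with `|β| ≤ π`, `ω ≥ 0`):
`|p² − p_{iβ}(p)²| ≤ 6 |sin(β/2)| p²`. -/
theorem exterior_scaled_momentum_sq_difference_bound
    (ω β p : ℝ) (hβ : |β| ≤ π) (hω : 0 ≤ ω)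
    (pb : ℂ)
    (hpb : pb = if |p| < ω then (p : ℂ)
      else ((Real.sign p * ω : ℝ) : ℂ) +
        Complex.exp (β * Complex.I) * ((p : ℂ) - ((Real.sign p * ω : ℝ) : ℂ))) :
    ‖(p : ℂ) ^ 2 - pb ^ 2‖ ≤ 6 * |Real.sin (β / 2)| * p ^ 2 := by
  rcases lt_or_ge |p| ω with h | h
  · rw [hpb, if_pos h]
    simp
    positivity
  · rw [hpb, if_neg (not_lt.2 h)]
    by_cases hp0 : p = 0
    · have hω0 : ω = 0 := le_antisymm (by simpa [hp0] using h) hω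
      subst hp0
      simp [hω0]
    · set s := Real.sign p with hsdef
      have hq1 : |s * ω| ≤ |p| ∧ |p - s * ω| ≤ |p| := by
        rcases lt_or_gt_of_ne hp0 with hneg | hpos
        · have hs : s = -1 := Real.sign_of_neg hneg
          have hpabs : |p| = -p := abs_of_neg hneg
          rw [hs, hpabs]
          constructor
          · rw [abs_of_nonpos (by nlinarith)]
            nlinarith [hpabs ▸ h]
          · rw [abs_of_nonpos (by nlinarith [hpabs ▸ h])]
            nlinarith
        · have hs : s = 1 := Real.sign_of_pos hpos
          have hpabs : |p| = p := abs_of_pos hpos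
          rw [hs, hpabs]
          constructor
          · rw [_root_.abs_of_nonneg (by nlinarith)]
            nlinarith [hpabs ▸ h]
          · rw [_root_.abs_of_nonneg (by nlinarith [hpabs ▸ h])]
            nlinarith
      obtain ⟨hq, hpq⟩ := hq1
      set e := Complex.exp (β * Complex.I) with hedef
      have he : ‖e‖ = 1 := Complex.norm_exp_ofReal_mul_I β
      have factor : (p : ℂ) ^ 2 - (((s * ω : ℝ) : ℂ) + e * ((p : ℂ) - ((s * ω : ℝ) : ℂ))) ^ 2
          = ((1 - e) * (((p - s * ω : ℝ) : ℂ)))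
            * ((p : ℂ) + (((s * ω : ℝ) : ℂ) + e * (((p - s * ω : ℝ) : ℂ)))) := by
        push_cast; ring
      rw [factor, norm_mul, norm_mul, abs_one_sub_exp, Complex.norm_real, Real.norm_eq_abs]
      have hb : ‖(p : ℂ) + (((s * ω : ℝ) : ℂ) + e * (((p - s * ω : ℝ) : ℂ)))‖
          ≤ 3 * |p| := by
        have h1 : ‖(p : ℂ) + (((s * ω : ℝ) : ℂ) + e * (((p - s * ω : ℝ) : ℂ)))‖
            ≤ ‖(p : ℂ)‖ + (‖((s * ω : ℝ) : ℂ)‖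
              + ‖e‖ * ‖(((p - s * ω : ℝ) : ℂ))‖) := by
          refine le_trans (norm_add_le _ _) ?_
          gcongr
          refine le_trans (norm_add_le _ _) ?_
          rw [norm_mul]
        rw [Complex.norm_real, Complex.norm_real, Complex.norm_real, Real.norm_eq_abs, Real.norm_eq_abs, Real.norm_eq_abs, he, one_mul] at h1
        linarith
      calc 2 * |Real.sin (β / 2)| * |p - s * ω|
            * ‖(p : ℂ) + (((s * ω : ℝ) : ℂ) + e * (((p - s * ω : ℝ) : ℂ)))‖
          ≤ 2 * |Real.sin (β / 2)| * |p| * (3 * |p|) := by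
            gcongr
        _ = 6 * |Real.sin (β / 2)| * p ^ 2 := by
            rw [← _root_.sq_abs p]; ring
end

section
/- Resolvent difference formula for exterior-dilated momentum operators: for α, β real with the resolvents defined at z, (r_{iβ}(z) − r_{iα}(z))/(2i) = z sin((β−α)/2) · r_{iα}(z) χ_{Ω_e} r_{iβ}(z) + sin((β−α)/4) ( e^{-i(β−α)/4} χ_{Ω_e} r_{iβ}(z) + e^{i(β−α)/4} r_{iα}(z) χ_{Ω_e} ), where r_{iθ}(z) := (D_{iθ} − z)^{-1} and χ_{Ω_e} is multiplication by the indicator of Ω_e = ℝ∖[−ω,ω]. -/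
open MeasureTheory Real Complex Filter Topology

/-- `v` (with derivative `v'` off `±ω`) lies in the domain of the exterior-dilated
momentum operator `D_{iθ}` at dilation parameter `iθ`: piecewise `H¹` on
`(-ω,ω)` and `ℝ∖[−ω,ω]` with the phase-jump `v(±ω±0) = e^{iθ/2} v(±ω∓0)`. -/
def InDomDilated (ω θ : ℝ) (v v' : ℝ → ℂ) : Prop :=
  MemLp v 2 (volume : Measure ℝ) ∧ MemLp v' 2 (volume : Measure ℝ) ∧
  (∀ t : ℝ, t ≠ ω → t ≠ -ω → HasDerivAt v (v' t) t) ∧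
  ∃ Lpo Lpi Lmo Lmi : ℂ,
    Tendsto v (nhdsWithin ω (Set.Ioi ω)) (nhds Lpo) ∧
    Tendsto v (nhdsWithin ω (Set.Iio ω)) (nhds Lpi) ∧
    Tendsto v (nhdsWithin (-ω) (Set.Iio (-ω))) (nhds Lmo) ∧
    Tendsto v (nhdsWithin (-ω) (Set.Ioi (-ω))) (nhds Lmi) ∧
    Lpo = Complex.exp ((θ / 2 : ℝ) * Complex.I) * Lpi ∧
    Lmo = Complex.exp ((θ / 2 : ℝ) * Complex.I) * Lmi

/-- Pointwise action of the exterior-dilated momentum operator `D_{iθ}`. -/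
noncomputable def DilatedD (ω θ : ℝ) (v' : ℝ → ℂ) : ℝ → ℂ := fun t =>
  if |t| < ω then -Complex.I * v' t
  else -Complex.I * Complex.exp (-(θ : ℝ) * Complex.I) * v' t

/-- Indicator of the exterior region `Ω_e = ℝ ∖ [−ω, ω]`. -/
noncomputable def chiExt (ω : ℝ) : ℝ → ℂ := fun t => if ω ≤ |t| then 1 else 0

lemma expSolConst {f f' : ℝ → ℂ} {c : ℂ} {s : Set ℝ}
    (hs : s.OrdConnected)
    (hder : ∀ t ∈ s, HasDerivAt f (f' t) t)
    (hae : ∀ᵐ t ∂(volume : Measure ℝ), t ∈ s → f' t = c * f t)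
    {x y : ℝ} (hx : x ∈ s) (hy : y ∈ s) :
    f y * Complex.exp (-(c * y)) = f x * Complex.exp (-(c * x)) := by
  set F : ℝ → ℂ := fun t => f t * Complex.exp (-(c * t)) with hF
  set F' : ℝ → ℂ := fun t => (f' t - c * f t) * Complex.exp (-(c * t)) with hF'
  have hsub : Set.uIcc x y ⊆ s := hs.uIcc_subset hx hy
  have hsub' : Set.uIoc x y ⊆ s := fun t ht => hsub (Set.Ioc_subset_Icc_self ht)
  have hder' : ∀ t ∈ Set.uIcc x y, HasDerivAt F (F' t) t := by
    intro t ht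
    have he : HasDerivAt (fun t : ℝ => Complex.exp (-(c * t))) (-c * Complex.exp (-(c * t))) t := by
      have h1 : HasDerivAt (fun t : ℝ => -(c * (t : ℂ))) (-c) t := by
        exact (by simpa using ((Complex.ofRealCLM.hasDerivAt (x := t)).const_mul c).neg :
          HasDerivAt (-fun y : ℝ => c * (y : ℂ)) (-c) t)
      simpa [mul_comm] using h1.cexp
    have := (hder t (hsub ht)).mul he
    convert this using 1
    show (f' t - c * f t) * Complex.exp (-(c * t)) = _; ring
    all_goals rfl
  have haeF : ∀ᵐ t ∂(volume : Measure ℝ), t ∈ Set.uIoc x y → F' t = 0 := by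
    filter_upwards [hae] with t ht hmem
    simp [hF', ht (hsub' hmem)]
  have hint : IntervalIntegrable F' volume x y := by
    rw [intervalIntegrable_iff]
    have : (0 : ℝ → ℂ) =ᵐ[volume.restrict (Set.uIoc x y)] F' := by
      have := (ae_restrict_iff' measurableSet_uIoc).2 haeF
      filter_upwards [this] with t ht
      simp [ht]
    exact (integrable_zero _ _ _).congr this
  have h1 := intervalIntegral.integral_eq_sub_of_hasDerivAt hder' hint
  have h2 : (∫ t in x..y, F' t) = 0 := by
    rw [intervalIntegral.integral_congr_ae (g := fun _ => (0:ℂ)) haeF]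
    simp
  have := h1.symm.trans h2
  have : F y = F x := by linear_combination this
  simpa [hF] using this

lemma l2Kill {g : ℝ → ℂ} {S : Set ℝ} {ε : ℝ}
    (hg : MemLp g 2 (volume : Measure ℝ)) (hS : MeasurableSet S)
    (hvol : volume S = ⊤) (hb : ∀ t ∈ S, ε ≤ ‖g t‖) : ε ≤ 0 := by
  by_contra hε
  push_neg at hε
  have hint : Integrable (fun t => ‖g t‖ ^ 2) (volume : Measure ℝ) :=
    (memLp_two_iff_integrable_sq_norm hg.aestronglyMeasurable).1 hg
  have hintS : IntegrableOn (fun t => ‖g t‖ ^ 2) S volume := hint.integrableOn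
  have hconst : Integrable (fun _ : ℝ => ε ^ 2) (volume.restrict S) := by
    refine Integrable.mono hintS aestronglyMeasurable_const ?_
    refine (ae_restrict_iff' hS).2 (Filter.Eventually.of_forall fun t ht => ?_)
    have h1 := hb t ht
    have h2 : ε ^ 2 ≤ ‖g t‖ ^ 2 := by nlinarith [norm_nonneg (g t)]
    simpa [_root_.abs_of_nonneg (le_of_lt (by positivity : (0:ℝ) < ε^2)), _root_.abs_of_nonneg (sq_nonneg ‖g t‖)] using h2.trans (le_abs_self _)
  rcases integrable_const_iff.1 hconst with h | h
  · nlinarith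
  · exact (isFiniteMeasure_restrict.mp h) hvol

lemma solveExp {gy K c y : ℂ} (h : gy * Complex.exp (-(c*y)) = K) :
    gy = K * Complex.exp (c*y) := by
  have h1 : Complex.exp (-(c*y)) * Complex.exp (c*y) = 1 := by
    rw [← Complex.exp_add]; simp
  linear_combination Complex.exp (c*y) * h - gy * h1

/-- resolvent difference formula
`(r_{iβ}(z) − r_{iα}(z))/(2i) = z sin((β−α)/2) r_{iα} χ_e r_{iβ}
  + sin((β−α)/4)(e^{−i(β−α)/4} χ_e r_{iβ} + e^{i(β−α)/4} r_{iα} χ_e)`,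
expressed through the solutions `vβ = r_{iβ}(z)u`, `vα = r_{iα}(z)u`,
`wα = r_{iα}(z)(χ_e vβ)`, `xα = r_{iα}(z)(χ_e u)`, for `z` in both resolvent sets
(`z ∉ e^{−iβ}ℝ ∪ e^{−iα}ℝ`). -/
theorem resolvent_difference_formula
    (ω α β : ℝ) (hω : 0 < ω) (z : ℂ)
    (hzβ : ∀ t : ℝ, z ≠ Complex.exp (-(β : ℝ) * Complex.I) * (t : ℂ))
    (hzα : ∀ t : ℝ, z ≠ Complex.exp (-(α : ℝ) * Complex.I) * (t : ℂ))
    (u vβ vβ' vα vα' wα wα' xα xα' : ℝ → ℂ)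
    (hvβ : InDomDilated ω β vβ vβ') (hvα : InDomDilated ω α vα vα')
    (hwα : InDomDilated ω α wα wα') (hxα : InDomDilated ω α xα xα')
    (hrβ : ∀ᵐ t ∂(volume : Measure ℝ), DilatedD ω β vβ' t - z * vβ t = u t)
    (hrα : ∀ᵐ t ∂(volume : Measure ℝ), DilatedD ω α vα' t - z * vα t = u t)
    (hw : ∀ᵐ t ∂(volume : Measure ℝ),
      DilatedD ω α wα' t - z * wα t = chiExt ω t * vβ t)
    (hx : ∀ᵐ t ∂(volume : Measure ℝ),
      DilatedD ω α xα' t - z * xα t = chiExt ω t * u t) :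
    ∀ᵐ t ∂(volume : Measure ℝ),
      (vβ t - vα t) / (2 * Complex.I) =
        z * (Real.sin ((β - α) / 2) : ℝ) * wα t +
        (Real.sin ((β - α) / 4) : ℝ) *
          (Complex.exp (-((β - α) / 4 : ℝ) * Complex.I) * chiExt ω t * vβ t +
            Complex.exp (((β - α) / 4 : ℝ) * Complex.I) * xα t) := by
  classical
  set s4 : ℂ := ((Real.sin ((β - α) / 4) : ℝ) : ℂ) with hs4def
  set s2 : ℂ := ((Real.sin ((β - α) / 2) : ℝ) : ℂ) with hs2def
  set a : ℂ := Complex.exp ((((β - α) / 4 : ℝ) : ℂ) * Complex.I) with hadef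
  set b : ℂ := Complex.exp (-(((β - α) / 4 : ℝ) : ℂ) * Complex.I) with hbdef
  set E : ℂ := Complex.exp (-(α : ℂ) * Complex.I) with hEdef
  set Ep : ℂ := Complex.exp ((α : ℂ) * Complex.I) with hEpdef
  obtain ⟨hvβ2, hvβ'2, hdvβ, Lβpo, Lβpi, Lβmo, Lβmi, hβpo, hβpi, hβmo, hβmi, hβjp, hβjm⟩ := hvβ
  obtain ⟨hvα2, hvα'2, hdvα, Lαpo, Lαpi, Lαmo, Lαmi, hαpo, hαpi, hαmo, hαmi, hαjp, hαjm⟩ := hvα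
  obtain ⟨hwα2, hwα'2, hdwα, Lwpo, Lwpi, Lwmo, Lwmi, hwpo, hwpi, hwmo, hwmi, hwjp, hwjm⟩ := hwα
  obtain ⟨hxα2, hxα'2, hdxα, Lxpo, Lxpi, Lxmo, Lxmi, hxpo, hxpi, hxmo, hxmi, hxjp, hxjm⟩ := hxα
  set hph : ℂ := Complex.exp (((α / 2 : ℝ) : ℂ) * Complex.I) with hphdef
  -- basic exponential identities
  have hexpinv : ∀ w : ℂ, Complex.exp w * Complex.exp (-w) = 1 := fun w => by
    rw [← Complex.exp_add, add_neg_cancel, Complex.exp_zero]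
  have hI2 : Complex.I * Complex.I = -1 := Complex.I_mul_I
  have hab : a * b = 1 := by
    rw [hadef, hbdef, show -(((β - α) / 4 : ℝ) : ℂ) * Complex.I
      = -(((((β - α) / 4 : ℝ) : ℂ)) * Complex.I) by ring]
    exact hexpinv _
  have hEE : E * Ep = 1 := by
    rw [hEdef, hEpdef, show -(α : ℂ) * Complex.I = -((α : ℂ) * Complex.I) by ring]
    rw [mul_comm]
    exact hexpinv _
  have hb4 : Complex.exp (-(β : ℂ) * Complex.I) = E * b ^ 4 := by
    rw [hEdef, hbdef, show -(β : ℂ) * Complex.I = (-(α : ℂ) * Complex.I)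
      + ((-(((β - α) / 4 : ℝ) : ℂ) * Complex.I) + ((-(((β - α) / 4 : ℝ) : ℂ) * Complex.I)
      + ((-(((β - α) / 4 : ℝ) : ℂ) * Complex.I) + (-(((β - α) / 4 : ℝ) : ℂ) * Complex.I))))
      by push_cast; ring]
    rw [Complex.exp_add, Complex.exp_add, Complex.exp_add, Complex.exp_add]
    ring
  have hhalfβ : Complex.exp (((β / 2 : ℝ) : ℂ) * Complex.I) = hph * a ^ 2 := by
    rw [hphdef, hadef, show ((β / 2 : ℝ) : ℂ) * Complex.I = (((α / 2 : ℝ) : ℂ) * Complex.I)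
      + (((((β - α) / 4 : ℝ) : ℂ) * Complex.I) + ((((β - α) / 4 : ℝ) : ℂ) * Complex.I))
      by push_cast; ring]
    rw [Complex.exp_add, Complex.exp_add]
    ring
  have ha2 : Complex.exp ((((β - α) / 2 : ℝ) : ℂ) * Complex.I) = a ^ 2 := by
    rw [hadef, show ((((β - α) / 2 : ℝ)) : ℂ) * Complex.I
      = ((((β - α) / 4 : ℝ) : ℂ) * Complex.I) + ((((β - α) / 4 : ℝ) : ℂ) * Complex.I)
      by push_cast; ring]
    rw [Complex.exp_add]; ring
  have hb2 : Complex.exp (-(((β - α) / 2 : ℝ) : ℂ) * Complex.I) = b ^ 2 := by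
    rw [hbdef, show (-(((β - α) / 2 : ℝ) : ℂ)) * Complex.I
      = (-(((β - α) / 4 : ℝ) : ℂ) * Complex.I) + (-(((β - α) / 4 : ℝ) : ℂ) * Complex.I)
      by push_cast; ring]
    rw [Complex.exp_add]; ring
  have hs4e : s4 = -((a - b) * Complex.I) / 2 := by
    rw [hs4def, Complex.ofReal_sin, Complex.sin, ← hbdef, ← hadef]; ring
  have hs2e : s2 = -((a ^ 2 - b ^ 2) * Complex.I) / 2 := by
    rw [hs2def, Complex.ofReal_sin, Complex.sin, hb2, ha2]; ring
  -- chi facts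
  have hch0 : ∀ t : ℝ, |t| < ω → chiExt ω t = 0 := fun t ht => if_neg (not_le.mpr ht)
  have hch1 : ∀ t : ℝ, ω ≤ |t| → chiExt ω t = 1 := fun t ht => if_pos ht
  -- the combination g and its derivative
  set g : ℝ → ℂ := fun t => (vα t - vβ t) * (Complex.I / 2)
    - (z * s2 * wα t + s4 * (b * (chiExt ω t * vβ t) + a * xα t)) with hgdef
  set g' : ℝ → ℂ := fun t => (vα' t - vβ' t) * (Complex.I / 2)
    - (z * s2 * wα' t + s4 * (b * (chiExt ω t * vβ' t) + a * xα' t)) with hg'def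
  set cin : ℂ := z * Complex.I with hcindef
  set cout : ℂ := z * Complex.I * Ep with hcoutdef
  -- derivative of g off ±ω
  have habsω : |ω| = ω := abs_of_pos hω
  have hder_in : ∀ t ∈ Set.Ioo (-ω) ω, HasDerivAt g (g' t) t := by
    intro t ht
    have h1 : |t| < ω := abs_lt.mpr ⟨ht.1, ht.2⟩
    have hne1 : t ≠ ω := fun h => by rw [h, habsω] at h1; exact lt_irrefl _ h1
    have hne2 : t ≠ -ω := fun h => by
      rw [h, abs_neg, habsω] at h1; exact lt_irrefl _ h1
    have hF : HasDerivAt (fun s => (vα s - vβ s) * (Complex.I / 2)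
        - (z * s2 * wα s + s4 * (b * ((0:ℂ) * vβ s) + a * xα s)))
        ((vα' t - vβ' t) * (Complex.I / 2)
        - (z * s2 * wα' t + s4 * (b * ((0:ℂ) * vβ' t) + a * xα' t))) t :=
      (((hdvα t hne1 hne2).sub (hdvβ t hne1 hne2)).mul_const _).sub
        (((hdwα t hne1 hne2).const_mul (z * s2)).add
          (((((hdvβ t hne1 hne2).const_mul (0:ℂ)).const_mul b).add
            ((hdxα t hne1 hne2).const_mul a)).const_mul s4))
    have hval : g' t = (vα' t - vβ' t) * (Complex.I / 2)
        - (z * s2 * wα' t + s4 * (b * ((0:ℂ) * vβ' t) + a * xα' t)) := by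
      simp only [hg'def]; rw [hch0 t h1]
    rw [hval]
    refine hF.congr_of_eventuallyEq ?_
    have hopen : IsOpen {s : ℝ | |s| < ω} := isOpen_lt _root_.continuous_abs continuous_const
    filter_upwards [hopen.mem_nhds h1] with s hs
    simp only [hgdef]; rw [hch0 s hs]
  have hder_out : ∀ t : ℝ, ω < |t| → HasDerivAt g (g' t) t := by
    intro t ht
    have hne1 : t ≠ ω := fun h => by rw [h, habsω] at ht; exact lt_irrefl _ ht
    have hne2 : t ≠ -ω := fun h => by
      rw [h, abs_neg, habsω] at ht; exact lt_irrefl _ ht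
    have hF : HasDerivAt (fun s => (vα s - vβ s) * (Complex.I / 2)
        - (z * s2 * wα s + s4 * (b * ((1:ℂ) * vβ s) + a * xα s)))
        ((vα' t - vβ' t) * (Complex.I / 2)
        - (z * s2 * wα' t + s4 * (b * ((1:ℂ) * vβ' t) + a * xα' t))) t :=
      (((hdvα t hne1 hne2).sub (hdvβ t hne1 hne2)).mul_const _).sub
        (((hdwα t hne1 hne2).const_mul (z * s2)).add
          (((((hdvβ t hne1 hne2).const_mul (1:ℂ)).const_mul b).add
            ((hdxα t hne1 hne2).const_mul a)).const_mul s4))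
    have hval : g' t = (vα' t - vβ' t) * (Complex.I / 2)
        - (z * s2 * wα' t + s4 * (b * ((1:ℂ) * vβ' t) + a * xα' t)) := by
      simp only [hg'def]; rw [hch1 t ht.le]
    rw [hval]
    refine hF.congr_of_eventuallyEq ?_
    have hopen : IsOpen {s : ℝ | ω < |s|} := isOpen_lt continuous_const _root_.continuous_abs
    filter_upwards [hopen.mem_nhds ht] with s hs
    simp only [hgdef]; rw [hch1 s (le_of_lt hs)]
  -- a.e. ODE inside
  have haeIn : ∀ᵐ t ∂(volume : Measure ℝ), t ∈ Set.Ioo (-ω) ω → g' t = cin * g t := by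
    filter_upwards [hrβ, hrα, hw, hx] with t h1 h2 h3 h4 ht
    have habs : |t| < ω := abs_lt.mpr ⟨ht.1, ht.2⟩
    simp only [DilatedD] at h1 h2 h3 h4
    rw [if_pos habs] at h1 h2 h3 h4
    have hc := hch0 t habs
    rw [hc] at h3 h4
    have sβ : vβ' t = Complex.I * (u t + z * vβ t) := by
      linear_combination Complex.I * h1 + (vβ' t) * hI2
    have sα : vα' t = Complex.I * (u t + z * vα t) := by
      linear_combination Complex.I * h2 + (vα' t) * hI2
    have sw : wα' t = Complex.I * (z * wα t) := by
      linear_combination Complex.I * h3 + (wα' t) * hI2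
    have sx : xα' t = Complex.I * (z * xα t) := by
      linear_combination Complex.I * h4 + (xα' t) * hI2
    simp only [hgdef, hg'def, hcindef]
    rw [hc]
    linear_combination (-(1/2 : ℂ) * Complex.I) * sβ + ((1/2 : ℂ) * Complex.I) * sα
      + (-(z * s2)) * sw + (-(s4 * a)) * sx
  -- a.e. ODE outside
  have haeOut : ∀ᵐ t ∂(volume : Measure ℝ), ω < |t| → g' t = cout * g t := by
    filter_upwards [hrβ, hrα, hw, hx] with t h1 h2 h3 h4 habs
    have hnl : ¬ |t| < ω := not_lt.mpr habs.le
    simp only [DilatedD] at h1 h2 h3 h4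
    rw [if_neg hnl] at h1 h2 h3 h4
    rw [← hEdef] at h2 h3 h4
    rw [hb4] at h1
    have hc := hch1 t habs.le
    rw [hc] at h3 h4
    have sβ : vβ' t = Complex.I * Ep * a ^ 4 * (u t + z * vβ t) := by
      linear_combination (Complex.I * Ep * a ^ 4) * h1 + (vβ' t * Ep * b ^ 4 * a ^ 4 * E) * hI2
        + (-(vβ' t * b ^ 4 * a ^ 4)) * hEE
        + (-(vβ' t) * (b ^ 3 * a ^ 3 + b ^ 2 * a ^ 2 + b * a + 1)) * hab
    have sα : vα' t = Complex.I * Ep * (u t + z * vα t) := by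
      linear_combination (Complex.I * Ep) * h2 + (vα' t * Ep * E) * hI2 + (-(vα' t)) * hEE
    have sw : wα' t = Complex.I * Ep * (vβ t + z * wα t) := by
      linear_combination (Complex.I * Ep) * h3 + (wα' t * Ep * E) * hI2 + (-(wα' t)) * hEE
    have sx : xα' t = Complex.I * Ep * (u t + z * xα t) := by
      linear_combination (Complex.I * Ep) * h4 + (xα' t * Ep * E) * hI2 + (-(xα' t)) * hEE
    simp only [hgdef, hg'def, hcoutdef]
    rw [hc]
    linear_combination (-(s4 * b) - Complex.I / 2) * sβ + (Complex.I / 2) * sα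
      + (-(z * s2)) * sw + (-(s4 * a)) * sx
      + (-(Ep * b * Complex.I * a ^ 4 * z * vβ t) - Ep * b * Complex.I * a ^ 4 * u t
          + Ep * b * Complex.I * z * vβ t - Ep * Complex.I * a * u t) * hs4e
      + (-(Ep * Complex.I * z * vβ t)) * hs2e
      + ((1/2 : ℂ) * Ep * (z * vβ t + u t)
          * (-(b ^ 2 * a ^ 4) + b * a ^ 5 - b * a - a ^ 4 + a ^ 2 + 1)) * hI2
      + ((1/2 : ℂ) * Ep * (z * vβ t + u t) * (b * a ^ 3 - a ^ 4 + a ^ 2 + 1)) * hab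
  -- MemLp of g
  have hmχ : Measurable (chiExt ω) := by
    unfold chiExt
    exact Measurable.ite (measurableSet_le measurable_const _root_.continuous_abs.measurable)
      measurable_const measurable_const
  have hχβ2 : MemLp (fun t => chiExt ω t * vβ t) 2 (volume : Measure ℝ) := by
    refine MemLp.of_le hvβ2 (hmχ.aestronglyMeasurable.mul hvβ2.aestronglyMeasurable)
      (Filter.Eventually.of_forall fun t => ?_)
    rw [norm_mul]
    have h1 : ‖chiExt ω t‖ ≤ 1 := by unfold chiExt; split <;> simp
    calc ‖chiExt ω t‖ * ‖vβ t‖ ≤ 1 * ‖vβ t‖ :=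
          mul_le_mul_of_nonneg_right h1 (norm_nonneg _)
      _ = ‖vβ t‖ := one_mul _
  have hg2 : MemLp g 2 (volume : Measure ℝ) := by
    have hbig : MemLp (fun t => (Complex.I / 2) * (vα t - vβ t)
        - (z * s2 * wα t + s4 * (b * (chiExt ω t * vβ t) + a * xα t))) 2
        (volume : Measure ℝ) :=
      ((hvα2.sub hvβ2).const_mul _).sub
        ((hwα2.const_mul (z * s2)).add
          (((hχβ2.const_mul b).add (hxα2.const_mul a)).const_mul s4))
    refine hbig.ae_eq (Filter.Eventually.of_forall fun t => ?_)
    simp only [hgdef]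
    ring
  -- explicit exponential solutions on the three pieces
  have h0mem : (0 : ℝ) ∈ Set.Ioo (-ω) ω := ⟨by linarith, hω⟩
  set K0 : ℂ := g 0 * Complex.exp (-(cin * (0 : ℝ))) with hK0def
  have hinEq : ∀ y ∈ Set.Ioo (-ω) ω, g y = K0 * Complex.exp (cin * y) := by
    intro y hy
    exact solveExp (expSolConst Set.ordConnected_Ioo hder_in haeIn h0mem hy)
  have hderP : ∀ t ∈ Set.Ioi ω, HasDerivAt g (g' t) t := fun t ht =>
    hder_out t (lt_of_lt_of_le ht (le_abs_self t))
  have haeP : ∀ᵐ t ∂(volume : Measure ℝ), t ∈ Set.Ioi ω → g' t = cout * g t :=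
    haeOut.mono fun t h ht => h (lt_of_lt_of_le ht (le_abs_self t))
  have hpmem : ω + 1 ∈ Set.Ioi ω := by simp
  set Kp : ℂ := g (ω + 1) * Complex.exp (-(cout * ((ω + 1 : ℝ)))) with hKpdef
  have hposEq : ∀ y ∈ Set.Ioi ω, g y = Kp * Complex.exp (cout * y) := by
    intro y hy
    exact solveExp (expSolConst Set.ordConnected_Ioi hderP haeP hpmem hy)
  have hderM : ∀ t ∈ Set.Iio (-ω), HasDerivAt g (g' t) t := fun t ht =>
    hder_out t (lt_of_lt_of_le (by have := Set.mem_Iio.mp ht; linarith : ω < -t) (neg_le_abs t))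
  have haeM : ∀ᵐ t ∂(volume : Measure ℝ), t ∈ Set.Iio (-ω) → g' t = cout * g t :=
    haeOut.mono fun t h ht => h (lt_of_lt_of_le (by have := Set.mem_Iio.mp ht; linarith : ω < -t) (neg_le_abs t))
  have hmmem : -ω - 1 ∈ Set.Iio (-ω) := by simp
  set Km : ℂ := g (-ω - 1) * Complex.exp (-(cout * ((-ω - 1 : ℝ)))) with hKmdef
  have hnegEq : ∀ y ∈ Set.Iio (-ω), g y = Km * Complex.exp (cout * y) := by
    intro y hy
    exact solveExp (expSolConst Set.ordConnected_Iio hderM haeM hmmem hy)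
  -- limits: explicit side
  have hcont : ∀ (K c : ℂ) (x : ℝ), Tendsto (fun t : ℝ => K * Complex.exp (c * t)) (𝓝 x)
      (𝓝 (K * Complex.exp (c * x))) := fun K c x =>
    (continuous_const.mul (Complex.continuous_exp.comp
      (continuous_const.mul Complex.continuous_ofReal))).tendsto x
  have hIooMi : Set.Ioo (-ω) ω ∈ 𝓝[>] (-ω) :=
    Ioo_mem_nhdsGT_of_mem ⟨le_refl _, by linarith⟩
  have hIooPi : Set.Ioo (-ω) ω ∈ 𝓝[<] ω :=
    Ioo_mem_nhdsLT_of_mem ⟨by linarith, le_refl _⟩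
  have t1mi : Tendsto g (𝓝[>] (-ω)) (𝓝 (K0 * Complex.exp (cin * ((-ω : ℝ) : ℂ)))) := by
    refine Tendsto.congr' ?_ ((hcont K0 cin (-ω)).mono_left nhdsWithin_le_nhds)
    filter_upwards [hIooMi] with y hy
    exact (hinEq y hy).symm
  have t1pi : Tendsto g (𝓝[<] ω) (𝓝 (K0 * Complex.exp (cin * ((ω : ℝ) : ℂ)))) := by
    refine Tendsto.congr' ?_ ((hcont K0 cin ω).mono_left nhdsWithin_le_nhds)
    filter_upwards [hIooPi] with y hy
    exact (hinEq y hy).symm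
  have t1mo : Tendsto g (𝓝[<] (-ω)) (𝓝 (Km * Complex.exp (cout * ((-ω : ℝ) : ℂ)))) := by
    refine Tendsto.congr' ?_ ((hcont Km cout (-ω)).mono_left nhdsWithin_le_nhds)
    filter_upwards [self_mem_nhdsWithin] with y hy
    exact (hnegEq y hy).symm
  have t1po : Tendsto g (𝓝[>] ω) (𝓝 (Kp * Complex.exp (cout * ((ω : ℝ) : ℂ)))) := by
    refine Tendsto.congr' ?_ ((hcont Kp cout ω).mono_left nhdsWithin_le_nhds)
    filter_upwards [self_mem_nhdsWithin] with y hy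
    exact (hposEq y hy).symm
  -- limits: component side
  have hχ0mi : Tendsto (fun t => chiExt ω t * vβ t) (𝓝[>] (-ω)) (𝓝 (0 : ℂ)) := by
    refine Tendsto.congr' ?_ (tendsto_const_nhds : Tendsto _ _ (nhds (0:ℂ)))
    filter_upwards [hIooMi] with y hy
    rw [hch0 y (abs_lt.mpr ⟨hy.1, hy.2⟩), zero_mul]
  have hχ0pi : Tendsto (fun t => chiExt ω t * vβ t) (𝓝[<] ω) (𝓝 (0 : ℂ)) := by
    refine Tendsto.congr' ?_ (tendsto_const_nhds : Tendsto _ _ (nhds (0:ℂ)))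
    filter_upwards [hIooPi] with y hy
    rw [hch0 y (abs_lt.mpr ⟨hy.1, hy.2⟩), zero_mul]
  have hχ1mo : Tendsto (fun t => chiExt ω t * vβ t) (𝓝[<] (-ω)) (𝓝 Lβmo) := by
    refine Tendsto.congr' ?_ hβmo
    filter_upwards [self_mem_nhdsWithin] with y hy
    rw [hch1 y (le_of_lt (lt_of_lt_of_le (by have := Set.mem_Iio.mp hy; linarith : ω < -y) (neg_le_abs y))), one_mul]
  have hχ1po : Tendsto (fun t => chiExt ω t * vβ t) (𝓝[>] ω) (𝓝 Lβpo) := by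
    refine Tendsto.congr' ?_ hβpo
    filter_upwards [self_mem_nhdsWithin] with y hy
    rw [hch1 y (le_of_lt (lt_of_lt_of_le hy (le_abs_self y))), one_mul]
  have t2mi : Tendsto g (𝓝[>] (-ω)) (𝓝 ((Lαmi - Lβmi) * (Complex.I / 2)
      - (z * s2 * Lwmi + s4 * (b * (0:ℂ) + a * Lxmi)))) := by
    simp only [hgdef]
    exact ((hαmi.sub hβmi).mul_const _).sub
      ((hwmi.const_mul (z * s2)).add
        (((hχ0mi.const_mul b).add (hxmi.const_mul a)).const_mul s4))
  have t2pi : Tendsto g (𝓝[<] ω) (𝓝 ((Lαpi - Lβpi) * (Complex.I / 2)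
      - (z * s2 * Lwpi + s4 * (b * (0:ℂ) + a * Lxpi)))) := by
    simp only [hgdef]
    exact ((hαpi.sub hβpi).mul_const _).sub
      ((hwpi.const_mul (z * s2)).add
        (((hχ0pi.const_mul b).add (hxpi.const_mul a)).const_mul s4))
  have t2mo : Tendsto g (𝓝[<] (-ω)) (𝓝 ((Lαmo - Lβmo) * (Complex.I / 2)
      - (z * s2 * Lwmo + s4 * (b * Lβmo + a * Lxmo)))) := by
    simp only [hgdef]
    exact ((hαmo.sub hβmo).mul_const _).sub
      ((hwmo.const_mul (z * s2)).add
        (((hχ1mo.const_mul b).add (hxmo.const_mul a)).const_mul s4))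
  have t2po : Tendsto g (𝓝[>] ω) (𝓝 ((Lαpo - Lβpo) * (Complex.I / 2)
      - (z * s2 * Lwpo + s4 * (b * Lβpo + a * Lxpo)))) := by
    simp only [hgdef]
    exact ((hαpo.sub hβpo).mul_const _).sub
      ((hwpo.const_mul (z * s2)).add
        (((hχ1po.const_mul b).add (hxpo.const_mul a)).const_mul s4))
  have Emi := tendsto_nhds_unique t2mi t1mi
  have Epi := tendsto_nhds_unique t2pi t1pi
  have Emo := tendsto_nhds_unique t2mo t1mo
  have Epo := tendsto_nhds_unique t2po t1po
  -- boundary conditions for g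
  rw [hhalfβ] at hβjm hβjp
  have hjm : (Lαmo - Lβmo) * (Complex.I / 2) - (z * s2 * Lwmo + s4 * (b * Lβmo + a * Lxmo))
      = hph * ((Lαmi - Lβmi) * (Complex.I / 2)
        - (z * s2 * Lwmi + s4 * (b * (0:ℂ) + a * Lxmi))) := by
    linear_combination (-(s4 * b) - Complex.I / 2) * hβjm + (Complex.I / 2) * hαjm
      + (-(s2 * z)) * hwjm + (-(s4 * a)) * hxjm
      + (-(b * a ^ 2 * hph * Lβmi)) * hs4e
      + ((1/2 : ℂ) * Complex.I * hph * Lβmi * (-(b * a) + a ^ 2 - 1)) * hab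
  have hjp : (Lαpo - Lβpo) * (Complex.I / 2) - (z * s2 * Lwpo + s4 * (b * Lβpo + a * Lxpo))
      = hph * ((Lαpi - Lβpi) * (Complex.I / 2)
        - (z * s2 * Lwpi + s4 * (b * (0:ℂ) + a * Lxpi))) := by
    linear_combination (-(s4 * b) - Complex.I / 2) * hβjp + (Complex.I / 2) * hαjp
      + (-(s2 * z)) * hwjp + (-(s4 * a)) * hxjp
      + (-(b * a ^ 2 * hph * Lβpi)) * hs4e
      + ((1/2 : ℂ) * Complex.I * hph * Lβpi * (-(b * a) + a ^ 2 - 1)) * hab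
  -- cout has nonzero real part
  have hre : cout.re ≠ 0 := by
    intro h0
    have h1 : cout = (z * Ep) * Complex.I := by rw [hcoutdef]; ring
    rw [h1, Complex.mul_I_re] at h0
    have him : (z * Ep).im = 0 := by linarith [neg_eq_zero.mp h0]
    refine hzα (z * Ep).re ?_
    have hwre : ((z * Ep).re : ℂ) = z * Ep := by
      refine Complex.ext ?_ ?_ <;> simp [him]
    calc z = z * (E * Ep) := by rw [hEE]; ring
      _ = E * (z * Ep) := by ring
      _ = E * ((z * Ep).re : ℂ) := by rw [hwre]
  -- norm of g on the outer rays
  have hnorm : ∀ (K : ℂ) (t : ℝ), ‖K * Complex.exp (cout * (t : ℂ))‖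
      = ‖K‖ * Real.exp (cout.re * t) := by
    intro K t
    rw [norm_mul, Complex.norm_exp]
    congr 2
    simp [Complex.mul_re]
  have hphne : hph ≠ 0 := by rw [hphdef]; exact Complex.exp_ne_zero _
  -- kill the constants
  have hKmKp : Km = 0 ∧ K0 = 0 ∧ Kp = 0 := by
    rcases lt_or_gt_of_ne hre with hlt | hgt
    · have hKm : Km = 0 := by
        by_contra hKm0
        have hb : ∀ t ∈ Set.Iio (-ω), ‖Km‖ * Real.exp (cout.re * (-ω)) ≤ ‖g t‖ := by
          intro t ht
          rw [hnegEq t ht, hnorm]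
          have h2 : cout.re * (-ω) ≤ cout.re * t := by nlinarith [ht.out]
          exact mul_le_mul_of_nonneg_left (Real.exp_le_exp.mpr h2) (norm_nonneg Km)
        have hkill := l2Kill hg2 measurableSet_Iio Real.volume_Iio hb
        nlinarith [Real.exp_pos (cout.re * (-ω)), norm_pos_iff.mpr hKm0]
      have hGmo : (Lαmo - Lβmo) * (Complex.I / 2)
          - (z * s2 * Lwmo + s4 * (b * Lβmo + a * Lxmo)) = 0 := by
        rw [Emo, hKm, zero_mul]
      have hGmi : (Lαmi - Lβmi) * (Complex.I / 2)
          - (z * s2 * Lwmi + s4 * (b * (0:ℂ) + a * Lxmi)) = 0 := by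
        rw [hGmo] at hjm
        exact ((mul_eq_zero.mp hjm.symm).resolve_left hphne)
      have hK0 : K0 = 0 := by
        rw [hGmi] at Emi
        exact ((mul_eq_zero.mp Emi.symm).resolve_right (Complex.exp_ne_zero _))
      have hGpi : (Lαpi - Lβpi) * (Complex.I / 2)
          - (z * s2 * Lwpi + s4 * (b * (0:ℂ) + a * Lxpi)) = 0 := by
        rw [Epi, hK0, zero_mul]
      have hGpo : (Lαpo - Lβpo) * (Complex.I / 2)
          - (z * s2 * Lwpo + s4 * (b * Lβpo + a * Lxpo)) = 0 := by
        rw [hjp, hGpi, mul_zero]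
      have hKp : Kp = 0 := by
        rw [hGpo] at Epo
        exact ((mul_eq_zero.mp Epo.symm).resolve_right (Complex.exp_ne_zero _))
      exact ⟨hKm, hK0, hKp⟩
    · have hKp : Kp = 0 := by
        by_contra hKp0
        have hb : ∀ t ∈ Set.Ioi ω, ‖Kp‖ * Real.exp (cout.re * ω) ≤ ‖g t‖ := by
          intro t ht
          rw [hposEq t ht, hnorm]
          have h2 : cout.re * ω ≤ cout.re * t := by nlinarith [ht.out]
          exact mul_le_mul_of_nonneg_left (Real.exp_le_exp.mpr h2) (norm_nonneg Kp)
        have hkill := l2Kill hg2 measurableSet_Ioi Real.volume_Ioi hb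
        nlinarith [Real.exp_pos (cout.re * ω), norm_pos_iff.mpr hKp0]
      have hGpo : (Lαpo - Lβpo) * (Complex.I / 2)
          - (z * s2 * Lwpo + s4 * (b * Lβpo + a * Lxpo)) = 0 := by
        rw [Epo, hKp, zero_mul]
      have hGpi : (Lαpi - Lβpi) * (Complex.I / 2)
          - (z * s2 * Lwpi + s4 * (b * (0:ℂ) + a * Lxpi)) = 0 := by
        rw [hGpo] at hjp
        exact ((mul_eq_zero.mp hjp.symm).resolve_left hphne)
      have hK0 : K0 = 0 := by
        rw [hGpi] at Epi
        exact ((mul_eq_zero.mp Epi.symm).resolve_right (Complex.exp_ne_zero _))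
      have hGmi : (Lαmi - Lβmi) * (Complex.I / 2)
          - (z * s2 * Lwmi + s4 * (b * (0:ℂ) + a * Lxmi)) = 0 := by
        rw [Emi, hK0, zero_mul]
      have hGmo : (Lαmo - Lβmo) * (Complex.I / 2)
          - (z * s2 * Lwmo + s4 * (b * Lβmo + a * Lxmo)) = 0 := by
        rw [hjm, hGmi, mul_zero]
      have hKm : Km = 0 := by
        rw [hGmo] at Emo
        exact ((mul_eq_zero.mp Emo.symm).resolve_right (Complex.exp_ne_zero _))
      exact ⟨hKm, hK0, hKp⟩
  obtain ⟨hKm, hK0, hKp⟩ := hKmKp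
  -- g vanishes off ±ω
  have hzero : ∀ t : ℝ, t ≠ ω → t ≠ -ω → g t = 0 := by
    intro t h1 h2
    rcases lt_trichotomy t (-ω) with h | h | h
    · rw [hnegEq t h, hKm, zero_mul]
    · exact absurd h h2
    · rcases lt_trichotomy t ω with h' | h' | h'
      · rw [hinEq t ⟨h, h'⟩, hK0, zero_mul]
      · exact absurd h' h1
      · rw [hposEq t h', hKp, zero_mul]
  have hae1 : ∀ᵐ t : ℝ ∂(volume : Measure ℝ), t ≠ ω := by simp [ae_iff]
  have hae2 : ∀ᵐ t : ℝ ∂(volume : Measure ℝ), t ≠ -ω := by simp [ae_iff]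
  filter_upwards [hae1, hae2] with t h1 h2
  have hg0 : g t = 0 := hzero t h1 h2
  have hrw : (vβ t - vα t) / (2 * Complex.I) = (vα t - vβ t) * (Complex.I / 2) := by
    rw [div_eq_iff (by simp [Complex.I_ne_zero] : (2 : ℂ) * Complex.I ≠ 0)]
    linear_combination (vβ t - vα t) * Complex.I_sq
  rw [hrw]
  simp only [hgdef] at hg0
  linear_combination hg0
end
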